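/- Let A be a bounded operator with A² - A = R where ∥R∥ < 1/4. Then the spectrum of A is contained in the union of the two disks of radius 1/2 centered at 0 and 1, and is disjoint from the circle |z - 1| = 1/2; hence the Riesz projection P = (i/2π) ∮_{|z-1|=1/2} (A - z)⁻¹ dz is well-defined. -/
import Mathlib


open ContinuousLinearMap

/-- If `A` is a bounded operator with `‖A² - A‖ < 1/4`, then the spectrum of `A` is
contained in the union of the two open disks of radius `1/2` centered at `0` and `1`;
in particular the spectrum is disjoint from the circle `|z - 1| = 1/2`, so the Riesz
projection along this circle is well defined. -/
theorem spectrum_almost_projection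
    {H : Type*} [NormedAddCommGroup H] [InnerProductSpace ℂ H] [CompleteSpace H]
    [Nontrivial H]
    (A : H →L[ℂ] H) (hR : ‖A ∘L A - A‖ < 1 / 4) :
    (∀ z ∈ spectrum ℂ A, ‖z‖ < 1 / 2 ∨ ‖z - 1‖ < 1 / 2) ∧
    (∀ z : ℂ, ‖z - 1‖ = 1 / 2 → z ∉ spectrum ℂ A) := by
  have key : ∀ z ∈ spectrum ℂ A, ‖z‖ * ‖z - 1‖ < 1 / 4 := by
    intro z hz
    have hsub := spectrum.subset_polynomial_aeval A
      (Polynomial.X ^ 2 - Polynomial.X : Polynomial ℂ)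
    have hmem : z ^ 2 - z ∈ spectrum ℂ
        (Polynomial.aeval A (Polynomial.X ^ 2 - Polynomial.X : Polynomial ℂ)) := by
      apply hsub
      exact ⟨z, hz, by simp⟩
    have heq : (Polynomial.aeval A (Polynomial.X ^ 2 - Polynomial.X : Polynomial ℂ))
        = A ∘L A - A := by
      simp [sq, mul_def]
    rw [heq] at hmem
    have hle := spectrum.norm_le_norm_of_mem hmem
    have : ‖z ^ 2 - z‖ = ‖z‖ * ‖z - 1‖ := by
      rw [← norm_mul]; ring_nf
    linarith
  constructor
  · intro z hz
    by_contra h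
    push_neg at h
    have h1 := h.1
    have h2 := h.2
    have := key z hz
    nlinarith [norm_nonneg z, norm_nonneg (z - 1)]
  · intro z hz1 hz
    have hk := key z hz
    have hge : (1 : ℝ) / 2 ≤ ‖z‖ := by
      have := norm_sub_norm_le (1 : ℂ) (1 - z)
      simp only [norm_one] at this
      have h1 : (1 : ℂ) - (1 - z) = z := by ring
      have h2 : ‖(1 : ℂ) - z‖ = ‖z - 1‖ := by rw [← neg_sub, norm_neg]
      rw [h1, h2, hz1] at this
      linarith
    nlinarith
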